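/- Let p be a prime, A a commutative ring of characteristic p, π, v ∈ A, n a positive integer and m an integer. Let B := A[X]/(X^p − π^{n(p−1)}X − v) with T the image of X, and let B_π be the localization of B inverting (the image of) π, in which π becomes a unit. Then for any a₀, a₁, …, a_{p−1} ∈ A there exist h ∈ B and b ∈ B_π such that, in B_π, π^{−pm}·∑_{i=0}^{p−1} a_i^p v^i = π^{−m}·∑_{i=0}^{p−1} a_i T^i − π^{−(pm−n(p−1))}·∑_{j=1}^{p−1} j·a_j^p·T^{p(j−1)+1} + π^{−(pm−2n(p−1))}·h + (b^p − b), where negative powers of π denote powers of the inverse of the unit π in B_π. -/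

import Mathlib

open Polynomial Finset

lemma exists_pow_expand {R : Type*} [CommRing R] (z d : R) (k : ℕ) :
    ∃ c, (z + d) ^ k = z ^ k + (k : R) * z ^ (k - 1) * d + d ^ 2 * c := by
  induction k with
  | zero => exact ⟨0, by simp⟩
  | succ k ih =>
    obtain ⟨c, hc⟩ := ih
    have hzz : (k : R) * (z * z ^ (k - 1)) = (k : R) * z ^ k := by
      cases k with
      | zero => simp
      | succ j => rw [show j + 1 - 1 = j from rfl, ← pow_succ']
    refine ⟨z * c + (k : R) * z ^ (k - 1) + d * c, ?_⟩
    rw [show k + 1 - 1 = k from rfl]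
    push_cast
    linear_combination (z + d) * hc + d * hzz

lemma exists_pow_expand' {R : Type*} [CommRing R] (z d : R) (k : ℕ) :
    ∃ e, (z + d) ^ k = z ^ k + d * e := by
  obtain ⟨e, he⟩ := sub_dvd_pow_sub_pow (z + d) z k
  refine ⟨e, ?_⟩
  rw [show z + d - z = d from by ring] at he
  linear_combination he

lemma key_identity {p : ℕ} (hp : p.Prime) {B : Type*} [CommRing B] (hch : (p : B) = 0)
    (w z t : B) (a : ℕ → B) (ht : t ^ p = w * t + z) :
    ∃ h : B, (∑ i ∈ range p, a i * t ^ i) ^ p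
      = (∑ i ∈ range p, a i ^ p * z ^ i)
        + w * (∑ j ∈ Finset.Ico 1 p, (j : B) * a j ^ p * t ^ (p * (j - 1) + 1))
        + w ^ 2 * h := by
  rcases subsingleton_or_nontrivial B with hB | hB
  · exact ⟨0, Subsingleton.elim _ _⟩
  haveI : CharP B p := (CharP.charP_iff_prime_eq_zero hp).mpr hch
  haveI : Fact p.Prime := ⟨hp⟩
  choose c hc using fun k => exists_pow_expand z (w * t) k
  choose e he using fun k => exists_pow_expand' z (w * t) k
  have htj : ∀ j : ℕ, t ^ (p * j) = (z + w * t) ^ j := by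
    intro j
    rw [pow_mul, ht, add_comm]
  have h1 : (∑ i ∈ range p, a i * t ^ i) ^ p
      = ∑ i ∈ range p, (a i ^ p * z ^ i
          + w * ((i : B) * a i ^ p * z ^ (i - 1) * t)
          + w ^ 2 * (a i ^ p * (t ^ 2 * c i))) := by
    rw [sum_pow_char]
    refine Finset.sum_congr rfl fun i _ => ?_
    rw [mul_pow, ← pow_mul, mul_comm i p, htj i, hc i]
    ring
  have h2 : ∑ i ∈ range p, (i : B) * a i ^ p * z ^ (i - 1) * t
      = ∑ j ∈ Finset.Ico 1 p, (j : B) * a j ^ p * z ^ (j - 1) * t := by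
    refine (Finset.sum_subset ?_ ?_).symm
    · intro x hx
      simp only [Finset.mem_Ico, Finset.mem_range] at *
      omega
    · intro x hx hx'
      simp only [Finset.mem_Ico, Finset.mem_range] at *
      have : x = 0 := by omega
      subst this; simp
  have h3 : ∑ j ∈ Finset.Ico 1 p, (j : B) * a j ^ p * t ^ (p * (j - 1) + 1)
      = (∑ j ∈ Finset.Ico 1 p, (j : B) * a j ^ p * z ^ (j - 1) * t)
        + w * (∑ j ∈ Finset.Ico 1 p, (j : B) * a j ^ p * (e (j - 1) * t ^ 2)) := by
    rw [Finset.mul_sum, ← Finset.sum_add_distrib]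
    refine Finset.sum_congr rfl fun j _ => ?_
    rw [pow_succ, htj (j - 1), he (j - 1)]
    ring
  refine ⟨(∑ i ∈ range p, a i ^ p * (t ^ 2 * c i))
      - (∑ j ∈ Finset.Ico 1 p, (j : B) * a j ^ p * (e (j - 1) * t ^ 2)), ?_⟩
  rw [h1, h3]
  simp only [Finset.sum_add_distrib, ← Finset.mul_sum]
  rw [h2]
  ring


/-- The polynomial `X^p − π^{n(p−1)}·X − v`. -/
noncomputable abbrev asPoly (p : ℕ) {A : Type*} [CommRing A] (π v : A) (n : ℕ) : Polynomial A :=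
  X ^ p - C (π ^ (n * (p - 1))) * X - C v

/-- `B = A[X]/(X^p − π^{n(p−1)}X − v)`. -/
noncomputable abbrev asExt (p : ℕ) {A : Type*} [CommRing A] (π v : A) (n : ℕ) : Type _ :=
  AdjoinRoot (asPoly p π v n)

/-- The localization `B_π` of `B` inverting the image of `π`. -/
noncomputable abbrev asExtLoc (p : ℕ) {A : Type*} [CommRing A] (π v : A) (n : ℕ) : Type _ :=
  Localization.Away (AdjoinRoot.of (asPoly p π v n) π)

/-- The canonical map `A → B_π`. -/
noncomputable def asIota (p : ℕ) {A : Type*} [CommRing A] (π v : A) (n : ℕ) :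
    A →+* asExtLoc p π v n :=
  (algebraMap (asExt p π v n) (asExtLoc p π v n)).comp (AdjoinRoot.of (asPoly p π v n))

/-- The image of the root `T` in `B_π`. -/
noncomputable def asRootLoc (p : ℕ) {A : Type*} [CommRing A] (π v : A) (n : ℕ) :
    asExtLoc p π v n :=
  algebraMap (asExt p π v n) (asExtLoc p π v n) (AdjoinRoot.root (asPoly p π v n))

/-- Lemma 2.4.2 (second assertion): in `B_π`, the element `π^{−pm}·∑ aᵢ^p vⁱ` equals, up to
addition of an element of the form `b^p − b`,
`π^{−m}·∑ aᵢ Tⁱ − π^{−(pm−n(p−1))}·∑_{j=1}^{p−1} j aⱼ^p T^{p(j−1)+1} + π^{−(pm−2n(p−1))}·h`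
for some `h ∈ B`. -/
theorem transform_pth_power_expression
    (p : ℕ) (hp : p.Prime) (A : Type*) [CommRing A] [CharP A p]
    (π v : A) (n : ℕ) (hn : 0 < n) (m : ℤ) (a : ℕ → A) :
    ∃ P : (asExtLoc p π v n)ˣ,
      (P : asExtLoc p π v n) = asIota p π v n π ∧
      ∃ (h : asExt p π v n) (b : asExtLoc p π v n),
        (↑(P ^ (-(p * m))) : asExtLoc p π v n) *
            asIota p π v n (∑ i ∈ Finset.range p, a i ^ p * v ^ i) =
          (↑(P ^ (-m)) : asExtLoc p π v n) *
              (∑ i ∈ Finset.range p, asIota p π v n (a i) * asRootLoc p π v n ^ i) -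
            (↑(P ^ (-(p * m - n * (p - 1)))) : asExtLoc p π v n) *
              (∑ j ∈ Finset.Ico 1 p,
                (j : asExtLoc p π v n) * asIota p π v n (a j) ^ p *
                  asRootLoc p π v n ^ (p * (j - 1) + 1)) +
            (↑(P ^ (-(p * m - 2 * (n * (p - 1))))) : asExtLoc p π v n) *
              algebraMap (asExt p π v n) (asExtLoc p π v n) h +
            (b ^ p - b) := by
  classical
  set N : ℕ := n * (p - 1) with hN
  set B := asExt p π v n with hB
  set R := asExtLoc p π v n with hR
  set ρ : A →+* B := AdjoinRoot.of (asPoly p π v n) with hρ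
  set φ : B →+* R := algebraMap B R with hφ
  set t : B := AdjoinRoot.root (asPoly p π v n) with htdef
  -- char p in B
  have hch : (p : B) = 0 := by
    have h0 : ((p : A) : B) = 0 := by rw [CharP.cast_eq_zero, map_zero]
    rw [← map_natCast ρ p]
    exact h0
  -- the root relation
  have ht : t ^ p = ρ π ^ N * t + ρ v := by
    have h0 := AdjoinRoot.mk_self (f := asPoly p π v n)
    simp only [asPoly, map_sub, map_mul, map_pow, AdjoinRoot.mk_X, AdjoinRoot.mk_C] at h0
    linear_combination h0
  obtain ⟨h₀, hkey⟩ := key_identity hp hch (ρ π ^ N) (ρ v) t (fun i => ρ (a i)) ht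
  have hu : IsUnit (φ (ρ π)) :=
    IsLocalization.Away.algebraMap_isUnit (S := R) (AdjoinRoot.of (asPoly p π v n) π)
  refine ⟨hu.unit, hu.unit_spec, -h₀, ↑(hu.unit ^ (-m)) * (∑ i ∈ Finset.range p,
      asIota p π v n (a i) * asRootLoc p π v n ^ i), ?_⟩
  set P := hu.unit with hPdef
  have hP : (↑P : R) = φ (ρ π) := hu.unit_spec
  have hmul : ∀ s u : ℤ, (↑(P ^ s) : R) * ↑(P ^ u) = ↑(P ^ (s + u)) := by
    intro s u; rw [← Units.val_mul, ← zpow_add]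
  have hPz : ∀ k : ℕ, φ (ρ (π ^ k)) = (↑(P ^ (k : ℤ)) : R) := by
    intro k
    rw [zpow_natCast, Units.val_pow_eq_pow_val, hP, map_pow, map_pow]
  -- map key to R
  set S1 : R := ∑ i ∈ Finset.range p, asIota p π v n (a i) * asRootLoc p π v n ^ i with hS1
  set S2 : R := ∑ j ∈ Finset.Ico 1 p, (j : R) * asIota p π v n (a j) ^ p *
      asRootLoc p π v n ^ (p * (j - 1) + 1) with hS2
  have hkeyR : S1 ^ p = asIota p π v n (∑ i ∈ Finset.range p, a i ^ p * v ^ i)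
      + (↑(P ^ (N : ℤ)) : R) * S2 + (↑(P ^ (N : ℤ)) : R) ^ 2 * φ h₀ := by
    have := congrArg φ hkey
    simp only [map_add, map_mul, map_pow, map_sum, map_natCast] at this
    rw [hS1, hS2]
    simp only [asIota, asRootLoc, RingHom.comp_apply, ← hφ, ← hρ, ← htdef, map_sum,
      map_mul, map_pow, map_natCast]
    have hPz' : (↑(P ^ (N : ℤ)) : R) = φ (ρ π) ^ N := by
      rw [zpow_natCast, Units.val_pow_eq_pow_val, hP]
    rw [hPz']
    simp only [map_natCast φ] at this
    exact this
  -- exponent bookkeeping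
  have hple : (1 : ℕ) ≤ p := hp.one_le
  have e2 : (-(p * m - (n : ℤ) * ((p : ℤ) - 1))) = -((p : ℤ) * m) + (N : ℤ) := by
    rw [hN]; push_cast [hple]; ring
  have e3 : (-(p * m - 2 * ((n : ℤ) * ((p : ℤ) - 1)))) = -((p : ℤ) * m) + ((N : ℤ) + (N : ℤ)) := by
    rw [hN]; push_cast [hple]; ring
  have hZp : (↑(P ^ (-m)) : R) ^ p = ↑(P ^ (-((p : ℤ) * m))) := by
    rw [← Units.val_pow_eq_pow_val, ← zpow_natCast (P ^ (-m)) p, ← zpow_mul]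
    congr 1
    ring
  rw [e2, e3, ← hmul, ← hmul, ← hmul, map_neg]
  rw [mul_pow, hZp]
  linear_combination (-(↑(P ^ (-((p : ℤ) * m))) : R)) * hkeyR
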